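/- arXiv:1306.5415 — 4 statements merged into one kernel-verified Lean document; each statement's English description precedes it below -/
import Mathlib

section
/- Let s ≥ 2 be an integer. For every complex number t with Re t > 1, ∑ n^(−t) = ζ(t)·ζ(st)/ζ(2t), where the sum runs over all positive integers n such that every exponent in the prime factorization of n is congruent to 0 or 1 modulo s, and ζ denotes the Riemann zeta function. -/
open Complex EulerProduct

/-- For `s ≥ 2` and `Re t > 1`, the Dirichlet series over positive integers all of whose
prime-factorization exponents are congruent to `0` or `1` modulo `s` equals
`ζ(t) ζ(st) / ζ(2t)`. -/
theorem stmt_16 (s : ℕ) (hs : 2 ≤ s) (t : ℂ) (ht : 1 < t.re) :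
    (∑' n : {n : ℕ // 0 < n ∧ ∀ p : ℕ, p.Prime →
        n.factorization p % s = 0 ∨ n.factorization p % s = 1}, ((n : ℕ) : ℂ) ^ (-t)) =
      riemannZeta t * riemannZeta (s * t) / riemannZeta (2 * t) := by
  classical
  have ht0 : t ≠ 0 := ne_zero_of_one_lt_re ht
  have hs0 : s ≠ 0 := by omega
  set P : ℕ → Prop := fun n => ∀ p : ℕ, p.Prime →
      n.factorization p % s = 0 ∨ n.factorization p % s = 1 with hP
  set f : ℕ → ℂ := fun n => if P n then riemannZetaSummandHom ht0 n else 0 with hf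
  have hzs : ⇑(riemannZetaSummandHom ht0) = fun n : ℕ => ((n : ℕ) : ℂ) ^ (-t) := rfl
  have hf0 : f 0 = 0 := by
    simp only [hf]; split <;> simp
  have hf1 : f 1 = 1 := by
    have h1 : P 1 := fun p hp => by simp [Nat.factorization_one]
    simp only [hf, if_pos h1, map_one]
  -- multiplicativity on coprime arguments
  have hmul : ∀ {m n : ℕ}, Nat.Coprime m n → f (m * n) = f m * f n := by
    intro m n hmn
    rcases eq_or_ne m 0 with rfl | hm0
    · have : n = 1 := by simpa using hmn
      subst this; simp [hf0, hf1]
    rcases eq_or_ne n 0 with rfl | hn0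
    · have : m = 1 := by simpa [Nat.Coprime] using hmn
      subst this; simp [hf0, hf1]
    have key : ∀ p : ℕ, p.Prime →
        ((m * n).factorization p = m.factorization p ∧ n.factorization p = 0) ∨
        ((m * n).factorization p = n.factorization p ∧ m.factorization p = 0) := by
      intro p hp
      have hadd : (m * n).factorization p = m.factorization p + n.factorization p := by
        rw [Nat.factorization_mul hm0 hn0]; rfl
      have : m.factorization p = 0 ∨ n.factorization p = 0 := by
        by_contra hcon
        push_neg at hcon
        have h1 : p ∣ m := Nat.dvd_of_factorization_pos hcon.1
        have h2 : p ∣ n := Nat.dvd_of_factorization_pos hcon.2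
        exact (Nat.Prime.not_coprime_iff_dvd.mpr ⟨p, hp, h1, h2⟩) hmn
      rcases this with h | h
      · right; constructor
        · rw [hadd, h, zero_add]
        · exact h
      · left; constructor
        · rw [hadd, h, add_zero]
        · exact h
    have hPiff : P (m * n) ↔ (P m ∧ P n) := by
      constructor
      · intro h
        constructor <;> intro p hp <;> rcases key p hp with ⟨h1, h2⟩ | ⟨h1, h2⟩ <;>
          rcases h p hp with h3 | h3 <;> simp_all
      · rintro ⟨h1, h2⟩ p hp
        rcases key p hp with ⟨he, _⟩ | ⟨he, _⟩
        · rw [he]; exact h1 p hp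
        · rw [he]; exact h2 p hp
    by_cases hPm : P m
    · by_cases hPn : P n
      · rw [hf]
        simp only [if_pos (hPiff.mpr ⟨hPm, hPn⟩), if_pos hPm, if_pos hPn, map_mul]
      · have : ¬ P (m * n) := fun h => hPn (hPiff.mp h).2
        simp only [hf, if_neg this, if_neg hPn, mul_zero]
    · have : ¬ P (m * n) := fun h => hPm (hPiff.mp h).1
      simp only [hf, if_neg this, if_neg hPm, zero_mul]
  -- summability
  have hsum : Summable (fun n => ‖f n‖) := by
    refine Summable.of_nonneg_of_le (fun n => norm_nonneg _) (fun n => ?_)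
      (summable_riemannZetaSummand ht)
    simp only [hf]
    split
    · exact le_rfl
    · simpa using norm_nonneg _
  have E : HasProd (fun p : Nat.Primes => ∑' e : ℕ, f ((p : ℕ) ^ e)) (∑' n : ℕ, f n) :=
    eulerProduct_hasProd hf1 hmul hsum hf0
  -- the LHS equals ∑' n, f n
  have hLHS : (∑' n : {n : ℕ // 0 < n ∧ P n}, ((n : ℕ) : ℂ) ^ (-t)) = ∑' n : ℕ, f n := by
    refine (tsum_subtype ({n : ℕ | 0 < n ∧ P n}) (fun n : ℕ => ((n : ℕ) : ℂ) ^ (-t))).trans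
      (tsum_congr fun n => ?_)
    rcases eq_or_ne n 0 with rfl | hn0
    · rw [hf0, Set.indicator_apply_eq_zero.mpr]
      intro h
      exact absurd h.1 (lt_irrefl 0)
    · by_cases hPn : P n
      · rw [Set.indicator_of_mem (by exact ⟨Nat.pos_of_ne_zero hn0, hPn⟩)]
        simp only [hf, if_pos hPn, hzs]
      · rw [Set.indicator_of_notMem (fun h => hPn h.2)]
        simp only [hf, if_neg hPn]
  -- local factors
  have hloc : ∀ p : Nat.Primes, (∑' e : ℕ, f ((p : ℕ) ^ e)) =
      (1 + ((p : ℕ) : ℂ) ^ (-t)) * (1 - (((p : ℕ) : ℂ) ^ (-t)) ^ s)⁻¹ := by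
    intro p
    set y : ℂ := ((p : ℕ) : ℂ) ^ (-t) with hy
    have hynorm : ‖y‖ < 1 :=
      lt_of_le_of_lt (norm_prime_cpow_le_one_half p ht) (by norm_num)
    have hys : ‖y ^ s‖ < 1 := by
      rw [norm_pow]
      exact pow_lt_one₀ (norm_nonneg _) hynorm hs0
    have hfp : ∀ e : ℕ, f ((p : ℕ) ^ e) =
        if e % s = 0 ∨ e % s = 1 then y ^ e else 0 := by
      intro e
      have hfac : ((p : ℕ) ^ e).factorization = Finsupp.single (p : ℕ) e :=
        Nat.Prime.factorization_pow p.prop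
      have hPiff : P ((p : ℕ) ^ e) ↔ (e % s = 0 ∨ e % s = 1) := by
        constructor
        · intro h
          have := h (p : ℕ) p.prop
          rwa [hfac, Finsupp.single_apply, if_pos rfl] at this
        · intro h q hq
          rw [hfac, Finsupp.single_apply]
          by_cases hqp : (p : ℕ) = q
          · rw [if_pos hqp]; exact h
          · rw [if_neg hqp]; left; exact Nat.zero_mod s
      have hhom : riemannZetaSummandHom ht0 ((p : ℕ) ^ e) = y ^ e := by
        rw [map_pow]; rfl
      simp only [hf, hhom, hPiff]
    -- split into residues 0 and 1 mod s
    have hS0 : HasSum (fun e : ℕ => if e % s = 0 then y ^ e else 0) (1 - y ^ s)⁻¹ := by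
      have hinj : Function.Injective (fun j : ℕ => s * j) :=
        fun a b h => by simpa [hs0] using h
      rw [← Function.Injective.hasSum_iff hinj ?_]
      · have := hasSum_geometric_of_norm_lt_one hys
        refine this.congr_fun fun j => ?_
        simp [Nat.mul_mod_right, pow_mul]
      · intro e he
        simp only [Set.mem_range, not_exists] at he
        rw [if_neg]
        intro h
        exact he (e / s) (Nat.mul_div_cancel' (Nat.dvd_of_mod_eq_zero h))
    have hS1 : HasSum (fun e : ℕ => if e % s = 1 then y ^ e else 0) ((1 - y ^ s)⁻¹ * y) := by
      have hinj : Function.Injective (fun j : ℕ => s * j + 1) :=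
        fun a b h => by simpa [hs0] using h
      rw [← Function.Injective.hasSum_iff hinj ?_]
      · have := (hasSum_geometric_of_norm_lt_one hys).mul_right y
        refine this.congr_fun fun j => ?_
        have hmod : (s * j + 1) % s = 1 := by
          rw [Nat.mul_add_mod]; exact Nat.mod_eq_of_lt (by omega)
        simp [hmod, pow_succ, pow_mul]
      · intro e he
        simp only [Set.mem_range, not_exists] at he
        rw [if_neg]
        intro h
        refine he (e / s) ?_
        have := Nat.div_add_mod e s
        omega
    have hadd : HasSum (fun e : ℕ => f ((p : ℕ) ^ e))
        ((1 - y ^ s)⁻¹ + (1 - y ^ s)⁻¹ * y) := by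
      have := hS0.add hS1
      refine this.congr_fun fun e => ?_
      rw [hfp e]
      by_cases h0 : e % s = 0
      · have h1 : e % s ≠ 1 := by omega
        simp [h0, h1]
      · by_cases h1 : e % s = 1
        · simp [h0, h1]
        · simp [h0, h1]
    rw [hadd.tsum_eq]
    ring
  -- zeta Euler products
  have hst : 1 < ((s : ℂ) * t).re := by
    have : ((s : ℂ) * t).re = s * t.re := by simp [Complex.mul_re]
    rw [this]
    nlinarith [ht, (show (2:ℝ) ≤ s by exact_mod_cast hs)]
  have h2t : 1 < ((2 : ℂ) * t).re := by
    have : ((2 : ℂ) * t).re = 2 * t.re := by simp [Complex.mul_re]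
    rw [this]; linarith
  have A := riemannZeta_eulerProduct_hasProd ht
  have B := riemannZeta_eulerProduct_hasProd hst
  have C := riemannZeta_eulerProduct_hasProd h2t
  have key : (∑' n : ℕ, f n) * riemannZeta (2 * t) =
      riemannZeta t * riemannZeta ((s : ℂ) * t) := by
    have hEC := E.mul C
    have hAB := A.mul B
    refine HasProd.unique ?_ hAB
    refine hEC.congr_fun fun p => ?_
    set y : ℂ := ((p : ℕ) : ℂ) ^ (-t) with hy
    have hynorm : ‖y‖ < 1 :=
      lt_of_le_of_lt (norm_prime_cpow_le_one_half p ht) (by norm_num)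
    have h2 : ((p : ℕ) : ℂ) ^ (-(2 * t)) = y ^ 2 := by
      rw [hy, ← cpow_nat_mul]
      norm_num
    have hsy : ((p : ℕ) : ℂ) ^ (-((s : ℂ) * t)) = y ^ s := by
      rw [hy, ← cpow_nat_mul]
      ring_nf
    rw [hloc p, h2, hsy, ← hy]
    have h1py : (1 : ℂ) + y ≠ 0 := by
      intro h
      have : y = -1 := by linear_combination h
      rw [this] at hynorm; simp at hynorm
    have h1my : (1 : ℂ) - y ≠ 0 := by
      intro h
      have : y = 1 := by linear_combination -h
      rw [this] at hynorm; simp at hynorm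
    have h1ys : (1 : ℂ) - y ^ s ≠ 0 := by
      intro h
      have hy1 : y ^ s = 1 := by linear_combination -h
      have hlt : ‖y ^ s‖ < 1 := by
        rw [norm_pow]; exact pow_lt_one₀ (norm_nonneg _) hynorm hs0
      rw [hy1, norm_one] at hlt
      exact lt_irrefl 1 hlt
    have hfact : (1 : ℂ) - y ^ 2 = (1 - y) * (1 + y) := by ring
    rw [hfact]
    field_simp
  rw [hLHS, eq_div_iff (riemannZeta_ne_zero_of_one_lt_re h2t)]
  exact key
end

section
/- Let s ≥ 3 be an odd integer. For every complex number t with Re t > 1, ∑ (−1)^(∑_p ⌊v_p(n)/s⌋) · n^(−t) = ζ(t)·ζ(2st) / (ζ(2t)·ζ(st)), where the sum runs over all positive integers n such that every exponent in the prime factorization of n is congruent to 0 or 1 modulo s, and ζ denotes the Riemann zeta function. -/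
open Complex

open Classical in
noncomputable def auxF (s : ℕ) (t : ℂ) : ℕ → ℂ := fun n =>
  if 0 < n ∧ ∀ p : ℕ, p.Prime → n.factorization p % s = 0 ∨ n.factorization p % s = 1
  then (-1 : ℂ) ^ (∑ p ∈ n.primeFactors, n.factorization p / s) * (n : ℂ) ^ (-t)
  else 0

lemma auxF_zero (s : ℕ) (t : ℂ) : auxF s t 0 = 0 := by simp [auxF]

lemma auxF_one (s : ℕ) (t : ℂ) : auxF s t 1 = 1 := by
  simp [auxF, Nat.factorization_one]

lemma key_coprime {m n : ℕ} (h : Nat.Coprime m n) (p : ℕ) (hp : p.Prime) :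
    m.factorization p = 0 ∨ n.factorization p = 0 := by
  by_contra hc
  push_neg at hc
  have h1 : p ∣ m := Nat.dvd_of_factorization_pos hc.1
  have h2 : p ∣ n := Nat.dvd_of_factorization_pos hc.2
  have : p ∣ 1 := h ▸ Nat.dvd_gcd h1 h2
  exact hp.one_lt.ne' (Nat.eq_one_of_dvd_one this)

lemma auxF_mul (s : ℕ) (t : ℂ) {m n : ℕ} (h : Nat.Coprime m n) :
    auxF s t (m * n) = auxF s t m * auxF s t n := by
  rcases Nat.eq_zero_or_pos m with rfl | hm
  · simp [auxF_zero]
  rcases Nat.eq_zero_or_pos n with rfl | hn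
  · simp [auxF_zero]
  have hm0 : m ≠ 0 := hm.ne'
  have hn0 : n ≠ 0 := hn.ne'
  have hfac : (m * n).factorization = m.factorization + n.factorization :=
    Nat.factorization_mul hm0 hn0
  have hpf : (m * n).primeFactors = m.primeFactors ∪ n.primeFactors :=
    Nat.primeFactors_mul hm0 hn0
  have hdisj : Disjoint m.primeFactors n.primeFactors :=
    Nat.Coprime.disjoint_primeFactors h
  -- condition equivalence
  have hcond : (∀ p : ℕ, p.Prime → (m * n).factorization p % s = 0 ∨
        (m * n).factorization p % s = 1) ↔
      ((∀ p : ℕ, p.Prime → m.factorization p % s = 0 ∨ m.factorization p % s = 1) ∧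
       (∀ p : ℕ, p.Prime → n.factorization p % s = 0 ∨ n.factorization p % s = 1)) := by
    constructor
    · intro H
      constructor <;> intro p hp <;>
        rcases key_coprime h p hp with h0 | h0 <;>
        have := H p hp <;> rw [hfac] at this <;> simp [h0] at this ⊢ <;> tauto
    · rintro ⟨H1, H2⟩ p hp
      rw [hfac]
      rcases key_coprime h p hp with h0 | h0 <;> simp [h0]
      · exact H2 p hp
      · exact H1 p hp
  -- sign splitting
  have hsign : (∑ p ∈ (m * n).primeFactors, (m * n).factorization p / s) =
      (∑ p ∈ m.primeFactors, m.factorization p / s) +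
      (∑ p ∈ n.primeFactors, n.factorization p / s) := by
    rw [hpf, Finset.sum_union hdisj]
    congr 1
    · refine Finset.sum_congr rfl fun p hp => ?_
      have hnp : n.factorization p = 0 := by
        rw [← Finsupp.notMem_support_iff, Nat.support_factorization]
        exact Finset.disjoint_left.mp hdisj hp
      rw [hfac]; simp [hnp]
    · refine Finset.sum_congr rfl fun p hp => ?_
      have hmp : m.factorization p = 0 := by
        rw [← Finsupp.notMem_support_iff, Nat.support_factorization]
        exact Finset.disjoint_right.mp hdisj hp
      rw [hfac]; simp [hmp]
  have hcpow : ((m * n : ℕ) : ℂ) ^ (-t) = (m : ℂ) ^ (-t) * (n : ℂ) ^ (-t) := by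
    push_cast
    exact natCast_mul_natCast_cpow m n (-t)
  by_cases hc : ∀ p : ℕ, p.Prime → (m * n).factorization p % s = 0 ∨
      (m * n).factorization p % s = 1
  · have ⟨h1, h2⟩ := hcond.mp hc
    rw [auxF, auxF, auxF, if_pos ⟨Nat.mul_pos hm hn, hc⟩, if_pos ⟨hm, h1⟩, if_pos ⟨hn, h2⟩,
      hsign, pow_add, hcpow]
    ring
  · rw [auxF, if_neg (fun hh => hc hh.2)]
    rcases (not_and_or.mp (fun hh : _ ∧ _ => hc (hcond.mpr hh))) with h1 | h1
    · exact (mul_eq_zero_of_left (by rw [auxF, if_neg (fun hh => h1 hh.2)]) _).symm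
    · exact (mul_eq_zero_of_right _ (by rw [auxF, if_neg (fun hh => h1 hh.2)])).symm

lemma auxF_summable (s : ℕ) {t : ℂ} (ht : 1 < t.re) : Summable (fun n => ‖auxF s t n‖) := by
  have h1 : Summable (fun n : ℕ => ‖(n : ℂ) ^ (-t)‖) := by
    rw [summable_norm_iff]
    have := Complex.summable_one_div_nat_cpow (p := t).mpr ht
    simpa only [one_div, ← cpow_neg] using this
  refine h1.of_nonneg_of_le (fun n => norm_nonneg _) fun n => ?_
  unfold auxF
  split
  · rw [norm_mul, norm_pow, norm_neg, norm_one, one_pow, one_mul]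
  · simp [norm_nonneg]

lemma auxF_pow (s : ℕ) (hs : 3 ≤ s) (t : ℂ) {p : ℕ} (hp : p.Prime) (e : ℕ) :
    auxF s t (p ^ e) =
      (if e % s = 0 ∨ e % s = 1 then (-1 : ℂ) ^ (e / s) else 0) * ((p : ℂ) ^ (-t)) ^ e := by
  have hfac : (p ^ e).factorization = Finsupp.single p e := hp.factorization_pow
  have hcpow : ((p ^ e : ℕ) : ℂ) ^ (-t) = ((p : ℂ) ^ (-t)) ^ e := by
    push_cast
    rw [← natCast_cpow_natCast_mul p e (-t), cpow_nat_mul]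
  have hcond : (∀ q : ℕ, q.Prime → (p ^ e).factorization q % s = 0 ∨
      (p ^ e).factorization q % s = 1) ↔ (e % s = 0 ∨ e % s = 1) := by
    rw [hfac]
    constructor
    · intro H
      have := H p hp
      simpa [Finsupp.single_eq_same] using this
    · intro H q hq
      rcases eq_or_ne q p with rfl | hqp
      · simpa [Finsupp.single_eq_same] using H
      · simp [Finsupp.single_apply, (Ne.symm hqp)]
  have hsum : (∑ q ∈ (p ^ e).primeFactors, (p ^ e).factorization q / s) = e / s := by
    rcases Nat.eq_zero_or_pos e with rfl | he
    · simp
    · rw [Nat.primeFactors_prime_pow he.ne' hp, Finset.sum_singleton, hfac,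
        Finsupp.single_eq_same]
  unfold auxF
  by_cases hc : e % s = 0 ∨ e % s = 1
  · rw [if_pos ⟨pow_pos hp.pos e, hcond.mpr hc⟩, if_pos hc, hsum, hcpow]
  · rw [if_neg (fun hh => hc (hcond.mp hh.2)), if_neg hc, zero_mul]

lemma local_hasSum (s : ℕ) (hs : 3 ≤ s) {x : ℂ} (hx : ‖x‖ < 1) :
    HasSum (fun e : ℕ => (if e % s = 0 ∨ e % s = 1 then (-1 : ℂ) ^ (e / s) else 0) * x ^ e)
      ((1 + x) * (1 + x ^ s)⁻¹) := by
  have hs0 : 0 < s := by omega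
  have hxs : ‖-x ^ s‖ < 1 := by
    rw [norm_neg, norm_pow]
    exact pow_lt_one₀ (norm_nonneg x) hx hs0.ne'
  have geom : HasSum (fun k : ℕ => (-x ^ s) ^ k) ((1 + x ^ s)⁻¹) := by
    have := hasSum_geometric_of_norm_lt_one hxs
    rwa [sub_neg_eq_add] at this
  set h0f : ℕ → ℂ := fun e => if e % s = 0 then (-1 : ℂ) ^ (e / s) * x ^ e else 0 with h0f_def
  set h1f : ℕ → ℂ := fun e => if e % s = 1 then (-1 : ℂ) ^ (e / s) * x ^ e else 0 with h1f_def
  have h0 : HasSum h0f ((1 + x ^ s)⁻¹) := by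
    have hj : Function.Injective (fun k : ℕ => k * s) :=
      fun a b hab => Nat.eq_of_mul_eq_mul_right hs0 hab
    have hout : ∀ e : ℕ, e ∉ Set.range (fun k : ℕ => k * s) → h0f e = 0 := by
      intro e he
      rw [h0f_def]
      simp only
      rw [if_neg]
      intro hmod
      exact he ⟨e / s, Nat.div_mul_cancel (Nat.dvd_of_mod_eq_zero hmod)⟩
    rw [← Function.Injective.hasSum_iff hj hout]
    have : (h0f ∘ fun k : ℕ => k * s) = fun k : ℕ => (-x ^ s) ^ k := by
      funext k
      have hm : (k * s) % s = 0 := Nat.mul_mod_left k s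
      have hd : (k * s) / s = k := Nat.mul_div_cancel k hs0
      show (if (k * s) % s = 0 then (-1 : ℂ) ^ (k * s / s) * x ^ (k * s) else 0) = _
      rw [if_pos hm, hd, mul_comm k s, pow_mul, ← neg_pow]
    rw [this]
    exact geom
  have h1 : HasSum h1f ((1 + x ^ s)⁻¹ * x) := by
    have hj : Function.Injective (fun k : ℕ => k * s + 1) := by
      intro a b hab
      simp only [add_left_inj] at hab
      exact Nat.eq_of_mul_eq_mul_right hs0 hab
    have hout : ∀ e : ℕ, e ∉ Set.range (fun k : ℕ => k * s + 1) → h1f e = 0 := by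
      intro e he
      rw [h1f_def]
      simp only
      rw [if_neg]
      intro hmod
      refine he ⟨e / s, ?_⟩
      show e / s * s + 1 = e
      have := Nat.div_add_mod e s
      rw [mul_comm]
      omega
    rw [← Function.Injective.hasSum_iff hj hout]
    have : (h1f ∘ fun k : ℕ => k * s + 1) = fun k : ℕ => (-x ^ s) ^ k * x := by
      funext k
      have hm : (k * s + 1) % s = 1 := by
        rw [add_comm, Nat.add_mul_mod_self_right, Nat.mod_eq_of_lt (by omega)]
      have hd : (k * s + 1) / s = k := by
        rw [mul_comm, Nat.mul_add_div hs0, Nat.div_eq_of_lt (by omega), add_zero]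
      show (if (k * s + 1) % s = 1 then (-1 : ℂ) ^ ((k * s + 1) / s) * x ^ (k * s + 1) else 0) = _
      rw [if_pos hm, hd, pow_succ, mul_comm k s, pow_mul, ← mul_assoc, ← neg_pow]
    rw [this]
    exact geom.mul_right x
  have heq : (fun e : ℕ => (if e % s = 0 ∨ e % s = 1 then (-1 : ℂ) ^ (e / s) else 0) * x ^ e)
      = fun e => h0f e + h1f e := by
    funext e
    by_cases he0 : e % s = 0
    · have he1 : e % s ≠ 1 := by omega
      simp [h0f_def, h1f_def, he0, he1]
    · by_cases he1 : e % s = 1 <;> simp [h0f_def, h1f_def, he0, he1]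
  rw [heq]
  have := h0.add h1
  have hval : (1 + x ^ s)⁻¹ + (1 + x ^ s)⁻¹ * x = (1 + x) * (1 + x ^ s)⁻¹ := by ring
  rwa [hval] at this

lemma hne_aux (y : ℂ) (hy : ‖y‖ < 1) : 1 - y ≠ 0 ∧ 1 + y ≠ 0 := by
  constructor
  · intro h
    rw [sub_eq_zero] at h
    rw [← h] at hy
    simp at hy
  · intro h
    have hy1 : y = -1 := by linear_combination h
    rw [hy1] at hy
    simp at hy

/-- For odd `s ≥ 3` and `Re t > 1`, the signed Dirichlet series over positive integers all of
whose prime-factorization exponents are congruent to `0` or `1` modulo `s`, with sign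
`(-1)^(∑_p ⌊v_p(n)/s⌋)`, equals `ζ(t) ζ(2st) / (ζ(2t) ζ(st))`. -/
theorem stmt_17 (s : ℕ) (hs : 3 ≤ s) (hodd : Odd s) (t : ℂ) (ht : 1 < t.re) :
    (∑' n : {n : ℕ // 0 < n ∧ ∀ p : ℕ, p.Prime →
        n.factorization p % s = 0 ∨ n.factorization p % s = 1},
      (-1 : ℂ) ^ (∑ p ∈ (n : ℕ).primeFactors, (n : ℕ).factorization p / s) *
        ((n : ℕ) : ℂ) ^ (-t)) =
      riemannZeta t * riemannZeta ((2 * s : ℕ) * t) /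
        (riemannZeta (2 * t) * riemannZeta (s * t)) := by
  classical
  -- the norm of p^{-t} is < 1
  have hx : ∀ p : Nat.Primes, ‖((p : ℕ) : ℂ) ^ (-t)‖ < 1 := by
    intro p
    rw [Complex.norm_natCast_cpow_of_pos p.prop.pos]
    have h1 : (1 : ℝ) < ((p : ℕ) : ℝ) := by exact_mod_cast p.prop.one_lt
    refine Real.rpow_lt_one_of_one_lt_of_neg h1 ?_
    simp only [Complex.neg_re]
    linarith
  -- LHS equals tsum of auxF
  have hLHS : (∑' n : {n : ℕ // 0 < n ∧ ∀ p : ℕ, p.Prime →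
        n.factorization p % s = 0 ∨ n.factorization p % s = 1},
      (-1 : ℂ) ^ (∑ p ∈ (n : ℕ).primeFactors, (n : ℕ).factorization p / s) *
        ((n : ℕ) : ℂ) ^ (-t)) = ∑' n : ℕ, auxF s t n := by
    have h1 := tsum_subtype (α := ℂ) (β := ℕ)
      {n : ℕ | 0 < n ∧ ∀ p : ℕ, p.Prime →
        n.factorization p % s = 0 ∨ n.factorization p % s = 1}
      (fun n => (-1 : ℂ) ^ (∑ p ∈ n.primeFactors, n.factorization p / s) * (n : ℂ) ^ (-t))
    refine h1.trans (tsum_congr fun n => ?_)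
    simp only [Set.indicator_apply, Set.mem_setOf_eq, auxF]
  -- Euler product for auxF
  have hEP := EulerProduct.eulerProduct_hasProd (f := auxF s t) (auxF_one s t)
    (fun {m n} h => auxF_mul s t h) (auxF_summable s ht) (auxF_zero s t)
  have hlocal : (fun p : Nat.Primes => ∑' e : ℕ, auxF s t ((p : ℕ) ^ e)) =
      fun p : Nat.Primes => (1 + ((p : ℕ) : ℂ) ^ (-t)) *
        (1 + (((p : ℕ) : ℂ) ^ (-t)) ^ s)⁻¹ := by
    funext p
    rw [tsum_congr (fun e => auxF_pow s hs t p.prop e)]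
    exact (local_hasSum s hs (hx p)).tsum_eq
  rw [hlocal] at hEP
  -- the zeta Euler products
  have key : ∀ (p : Nat.Primes) (k : ℕ),
      ((p : ℕ) : ℂ) ^ (-((k : ℂ) * t)) = (((p : ℕ) : ℂ) ^ (-t)) ^ k := by
    intro p k
    rw [show -((k : ℂ) * t) = (k : ℂ) * (-t) by ring, cpow_nat_mul]
  have hA := riemannZeta_eulerProduct_hasProd ht
  have h2re : 1 < (2 * t).re := by
    have : (2 * t).re = 2 * t.re := by simp [Complex.mul_re]
    rw [this]; linarith
  have hs3 : (3 : ℝ) ≤ (s : ℝ) := by exact_mod_cast hs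
  have hsre : 1 < ((s : ℂ) * t).re := by
    have : ((s : ℂ) * t).re = (s : ℝ) * t.re := by simp [Complex.mul_re]
    rw [this]; nlinarith
  have h2sre : 1 < (((2 * s : ℕ) : ℂ) * t).re := by
    have : (((2 * s : ℕ) : ℂ) * t).re = ((2 * s : ℕ) : ℝ) * t.re := by simp [Complex.mul_re]
    rw [this]
    have : (6 : ℝ) ≤ ((2 * s : ℕ) : ℝ) := by push_cast; linarith
    nlinarith
  have hB := riemannZeta_eulerProduct_hasProd h2sre
  have hC := riemannZeta_eulerProduct_hasProd h2re
  have hD := riemannZeta_eulerProduct_hasProd hsre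
  have hBe : (fun p : Nat.Primes => (1 - ((p : ℕ) : ℂ) ^ (-(((2 * s : ℕ) : ℂ) * t)))⁻¹) =
      fun p : Nat.Primes => (1 - (((p : ℕ) : ℂ) ^ (-t)) ^ (2 * s))⁻¹ := by
    funext p; rw [key p (2 * s)]
  have hCe : (fun p : Nat.Primes => (1 - ((p : ℕ) : ℂ) ^ (-(2 * t)))⁻¹) =
      fun p : Nat.Primes => (1 - (((p : ℕ) : ℂ) ^ (-t)) ^ 2)⁻¹ := by
    funext p
    rw [show (2 : ℂ) * t = ((2 : ℕ) : ℂ) * t by norm_num, key p 2]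
  have hDe : (fun p : Nat.Primes => (1 - ((p : ℕ) : ℂ) ^ (-((s : ℂ) * t)))⁻¹) =
      fun p : Nat.Primes => (1 - (((p : ℕ) : ℂ) ^ (-t)) ^ s)⁻¹ := by
    funext p; rw [key p s]
  rw [hBe] at hB
  rw [hCe] at hC
  rw [hDe] at hD
  -- combine
  have hmulL := (hEP.mul hC).mul hD
  have hmulR := hA.mul hB
  have heqfun : (fun p : Nat.Primes =>
        (1 + ((p : ℕ) : ℂ) ^ (-t)) * (1 + (((p : ℕ) : ℂ) ^ (-t)) ^ s)⁻¹ *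
          (1 - (((p : ℕ) : ℂ) ^ (-t)) ^ 2)⁻¹ * (1 - (((p : ℕ) : ℂ) ^ (-t)) ^ s)⁻¹) =
      fun p : Nat.Primes =>
        (1 - ((p : ℕ) : ℂ) ^ (-t))⁻¹ * (1 - (((p : ℕ) : ℂ) ^ (-t)) ^ (2 * s))⁻¹ := by
    funext p
    set x : ℂ := ((p : ℕ) : ℂ) ^ (-t) with hxdef
    have hx1 := hx p
    have hxs : ‖x ^ s‖ < 1 := by
      rw [norm_pow]
      exact pow_lt_one₀ (norm_nonneg x) hx1 (by omega)
    obtain ⟨n1, n2⟩ := hne_aux x hx1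
    obtain ⟨n3, n4⟩ := hne_aux (x ^ s) hxs
    have e1 : 1 - x ^ 2 = (1 - x) * (1 + x) := by ring
    have e2 : 1 - x ^ (2 * s) = (1 - x ^ s) * (1 + x ^ s) := by
      rw [mul_comm 2 s, pow_mul]; ring
    rw [e1, e2]
    field_simp
  rw [heqfun] at hmulL
  have hmain : (∑' n : ℕ, auxF s t n) * riemannZeta (2 * t) * riemannZeta ((s : ℂ) * t) =
      riemannZeta t * riemannZeta (((2 * s : ℕ) : ℂ) * t) := hmulL.unique hmulR
  have hz2 : riemannZeta (2 * t) ≠ 0 := riemannZeta_ne_zero_of_one_lt_re h2re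
  have hzs : riemannZeta ((s : ℂ) * t) ≠ 0 := riemannZeta_ne_zero_of_one_lt_re hsre
  rw [hLHS]
  push_cast at hmain ⊢
  field_simp
  linear_combination hmain
end

section
/- Let s ≥ 3 be an odd integer. For every complex number t with Re t > 1, ∑ (−1)^(∑_p ⌊v_p(n)/s⌋) · 2^(ω(n)) · n^(−t) = ζ(t)²·ζ(2st) / (ζ(2t)·ζ(st)²), where the sum runs over all positive integers n such that no exponent in the prime factorization of n is divisible by s (i.e., s ∤ v_p(n) for every prime p dividing n; n = 1 is included with summand 1), ω(n) is the number of distinct prime factors of n, and ζ denotes the Riemann zeta function. -/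
set_option maxHeartbeats 1000000

open Complex


lemma local_sum (m : ℕ) {x : ℂ} (hx : ‖x‖ < 1) :
    ∑' e : ℕ, (if e = 0 then 1 else if (m+1) ∣ e then 0 else 2 * (-1:ℂ)^(e/(m+1))) * x^e
      = (1+x)*(1-x^(m+1)) / ((1-x)*(1+x^(m+1))) := by
  set s := m + 1 with hsdef
  set T : ℕ → ℂ := fun e => (if e = 0 then 1 else if s ∣ e then 0 else 2 * (-1:ℂ)^(e/s)) * x^e
    with hT
  have hx1 : (1:ℂ) - x ≠ 0 := by
    intro h
    have : x = 1 := by linear_combination -h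
    simp [this] at hx
  have hxs : ‖x^s‖ < 1 := by
    rw [norm_pow]
    exact pow_lt_one₀ (norm_nonneg x) hx (by omega)
  have hx2 : (1:ℂ) + x^s ≠ 0 := by
    intro h
    have : x ^ s = -1 := by linear_combination h
    rw [this] at hxs
    simp at hxs
  have hbound : ∀ e, ‖T e‖ ≤ 2 * ‖x‖ ^ e := by
    intro e
    rw [hT]
    simp only []
    rw [norm_mul, norm_pow]
    have h2 : ‖if e = 0 then 1 else if s ∣ e then (0:ℂ) else 2 * (-1:ℂ)^(e/s)‖ ≤ 2 := by
      split_ifs <;> simp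
    exact mul_le_mul_of_nonneg_right h2 (pow_nonneg (norm_nonneg x) e)
  have hsummT : Summable T := by
    refine Summable.of_norm (Summable.of_nonneg_of_le (fun e => norm_nonneg _) hbound ?_)
    exact (summable_geometric_of_lt_one (norm_nonneg x) hx).mul_left 2
  haveI : NeZero s := ⟨by omega⟩
  have key := ((Nat.divModEquiv s).symm.tsum_eq T)
  rw [← key]
  have hsummT' : Summable (fun p : ℕ × Fin s => T ((Nat.divModEquiv s).symm p)) :=
    (Nat.divModEquiv s).symm.summable_iff.mpr hsummT
  rw [Summable.tsum_prod' hsummT' (fun q => hsummT'.comp_injective (fun a b h => by simpa using h))]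
  set X : ℂ := ∑ i ∈ Finset.range m, x^(i+1) with hXdef
  have hinner : ∀ q : ℕ, ∑' (r : Fin s), T ((Nat.divModEquiv s).symm (q, r))
      = (if q = 0 then 1 else 0) + (-(x^s))^q * (2 * X) := by
    intro q
    rw [tsum_fintype]
    have h1 : ∀ r : Fin s, T ((Nat.divModEquiv s).symm (q, r)) = T (q * s + r) := by
      intro r; rfl
    simp only [h1]
    rw [Fin.sum_univ_eq_sum_range (fun i => T (q * s + i)) s, hsdef,
      Finset.sum_range_succ' (fun i => T (q * s + i)) m]
    have h0 : T (q * s + 0) = if q = 0 then 1 else 0 := by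
      rw [add_zero, hT]
      simp only []
      rcases Nat.eq_zero_or_pos q with rfl | hq
      · simp
      · rw [if_neg (by positivity), if_pos (dvd_mul_left s q), zero_mul, if_neg (by omega)]
    have h2 : ∀ i ∈ Finset.range m, T (q * s + (i+1)) = (-(x^s))^q * (2 * x^(i+1)) := by
      intro i hi
      have him : i + 1 < s := by simp at hi; omega
      have hnd : ¬ s ∣ (q * s + (i+1)) := by
        rw [mul_comm, Nat.dvd_add_right (dvd_mul_right s q)]
        intro h
        exact absurd (Nat.le_of_dvd (by omega) h) (by omega)
      have hdiv : (q * s + (i+1)) / s = q := by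
        rw [mul_comm, Nat.mul_add_div (by omega), Nat.div_eq_of_lt him, add_zero]
      rw [hT]
      simp only []
      rw [if_neg (by omega), if_neg hnd, hdiv, pow_add]
      have hnp : (-(x^s))^q = (-1:ℂ)^q * x^(q*s) := by
        rw [neg_pow, ← pow_mul, mul_comm s q]
      rw [hnp]; ring
    rw [Finset.sum_congr rfl h2, h0, ← Finset.mul_sum, ← Finset.mul_sum, add_comm]
  simp only [hinner]
  have hxs' : ‖-(x^s)‖ < 1 := by rwa [norm_neg]
  have hsum1 : Summable (fun q : ℕ => if q = 0 then (1:ℂ) else 0) :=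
    ⟨1, hasSum_ite_eq 0 1⟩
  have hsum2 : Summable (fun q : ℕ => (-(x^s))^q * (2 * X)) :=
    (summable_geometric_of_norm_lt_one hxs').mul_right _
  rw [Summable.tsum_add hsum1 hsum2, tsum_ite_eq 0 (fun _ => (1:ℂ)), tsum_mul_right,
    tsum_geometric_of_norm_lt_one hxs', sub_neg_eq_add]
  have hX : (1 - x) * X = x - x^s := by
    have hg := geom_sum_mul x m
    have hX2 : X = (∑ i ∈ Finset.range m, x^i) * x := by
      rw [hXdef, Finset.sum_mul]
      exact Finset.sum_congr rfl fun i _ => (pow_succ x i).symm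
    rw [hX2, hsdef]
    linear_combination -x * hg
  field_simp
  linear_combination 2 * hX


def Pc (s n : ℕ) : Prop :=
  0 < n ∧ ∀ p : ℕ, p.Prime → p ∣ n → ¬ s ∣ n.factorization p

open Classical in
noncomputable def Fc (s : ℕ) (t : ℂ) : ℕ → ℂ := fun n =>
  if Pc s n
  then (-1 : ℂ) ^ (∑ p ∈ n.primeFactors, n.factorization p / s) *
        (2 : ℂ) ^ n.primeFactors.card * ((n : ℕ) : ℂ) ^ (-t)
  else 0

lemma Fc_zero (s : ℕ) (t : ℂ) : Fc s t 0 = 0 := by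
  rw [Fc, if_neg]
  rintro ⟨h, -⟩
  exact lt_irrefl 0 h

lemma Fc_one (s : ℕ) (t : ℂ) : Fc s t 1 = 1 := by
  rw [Fc, if_pos]
  · simp
  · exact ⟨one_pos, fun p hp hd => absurd (Nat.eq_one_of_dvd_one hd) hp.ne_one⟩

lemma fact_mul_left {m n p : ℕ} (hm : m ≠ 0) (hn : n ≠ 0) (h : Nat.Coprime m n)
    (hp : p.Prime) (hpm : p ∣ m) :
    (m * n).factorization p = m.factorization p := by
  rw [Nat.factorization_mul hm hn]
  have hpn : ¬ p ∣ n := fun hd => hp.ne_one (Nat.eq_one_of_dvd_one (h ▸ Nat.dvd_gcd hpm hd))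
  simp [Nat.factorization_eq_zero_of_not_dvd hpn]

lemma fact_mul_right {m n p : ℕ} (hm : m ≠ 0) (hn : n ≠ 0) (h : Nat.Coprime m n)
    (hp : p.Prime) (hpn : p ∣ n) :
    (m * n).factorization p = n.factorization p := by
  rw [mul_comm]
  exact fact_mul_left hn hm h.symm hp hpn

lemma Fc_mul (s : ℕ) (t : ℂ) {m n : ℕ} (hmn : Nat.Coprime m n) :
    Fc s t (m * n) = Fc s t m * Fc s t n := by
  rcases eq_or_ne m 0 with rfl | hm0
  · simp [Fc_zero]
  rcases eq_or_ne n 0 with rfl | hn0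
  · simp [Fc_zero]
  have hiff : Pc s (m * n) ↔ Pc s m ∧ Pc s n := by
    constructor
    · rintro ⟨-, h⟩
      refine ⟨⟨Nat.pos_of_ne_zero hm0, fun p hp hd => ?_⟩,
        ⟨Nat.pos_of_ne_zero hn0, fun p hp hd => ?_⟩⟩
      · rw [← fact_mul_left hm0 hn0 hmn hp hd]
        exact h p hp (hd.trans (dvd_mul_right m n))
      · rw [← fact_mul_right hm0 hn0 hmn hp hd]
        exact h p hp (hd.trans (dvd_mul_left n m))
    · rintro ⟨⟨-, h1⟩, ⟨-, h2⟩⟩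
      refine ⟨Nat.pos_of_ne_zero (by positivity), fun p hp hd => ?_⟩
      rcases (Nat.Prime.dvd_mul hp).mp hd with hc | hc
      · rw [fact_mul_left hm0 hn0 hmn hp hc]; exact h1 p hp hc
      · rw [fact_mul_right hm0 hn0 hmn hp hc]; exact h2 p hp hc
  by_cases H : Pc s m ∧ Pc s n
  · rw [Fc, Fc, Fc, if_pos (hiff.mpr H), if_pos H.1, if_pos H.2]
    have hpf : (m * n).primeFactors = m.primeFactors ∪ n.primeFactors :=
      Nat.primeFactors_mul hm0 hn0
    have hdisj : Disjoint m.primeFactors n.primeFactors :=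
      Nat.Coprime.disjoint_primeFactors hmn
    have hsum : ∑ p ∈ (m * n).primeFactors, (m * n).factorization p / s
        = (∑ p ∈ m.primeFactors, m.factorization p / s)
          + ∑ p ∈ n.primeFactors, n.factorization p / s := by
      rw [hpf, Finset.sum_union hdisj]
      congr 1
      · refine Finset.sum_congr rfl fun p hp => ?_
        rw [fact_mul_left hm0 hn0 hmn (Nat.prime_of_mem_primeFactors hp)
          (Nat.dvd_of_mem_primeFactors hp)]
      · refine Finset.sum_congr rfl fun p hp => ?_
        rw [fact_mul_right hm0 hn0 hmn (Nat.prime_of_mem_primeFactors hp)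
          (Nat.dvd_of_mem_primeFactors hp)]
    have hcard : (m * n).primeFactors.card
        = m.primeFactors.card + n.primeFactors.card := by
      rw [hpf, Finset.card_union_of_disjoint hdisj]
    have hcpow : ((m * n : ℕ) : ℂ) ^ (-t) = (m : ℂ) ^ (-t) * (n : ℂ) ^ (-t) := by
      push_cast
      exact natCast_mul_natCast_cpow m n (-t)
    rw [hsum, hcard, hcpow, pow_add, pow_add]
    ring
  · rw [Fc, Fc, Fc, if_neg (fun h => H (hiff.mp h))]
    rcases not_and_or.mp H with hc | hc
    · rw [if_neg hc, zero_mul]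
    · rw [if_neg hc, mul_zero]

lemma two_pow_card_le {n : ℕ} (hn : n ≠ 0) :
    (2 : ℕ) ^ n.primeFactors.card ≤ n.divisors.card := by
  rw [Nat.card_divisors hn]
  calc (2 : ℕ) ^ n.primeFactors.card = ∏ _p ∈ n.primeFactors, 2 := by
        rw [Finset.prod_const]
    _ ≤ ∏ p ∈ n.primeFactors, (n.factorization p + 1) := by
        refine Finset.prod_le_prod' fun p hp => ?_
        have : n.factorization p ≠ 0 := by
          rw [← Finsupp.mem_support_iff, Nat.support_factorization]; exact hp
        omega

open scoped LSeries.notation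
open ArithmeticFunction
open scoped ArithmeticFunction.zeta

lemma card_divisorsAntidiagonal' (n : ℕ) :
    n.divisorsAntidiagonal.card = n.divisors.card := by
  rw [← Nat.image_fst_divisorsAntidiagonal (n := n), Finset.card_image_of_injOn]
  intro p hp q hq h
  obtain ⟨hp1, hn⟩ := Nat.mem_divisorsAntidiagonal.mp hp
  obtain ⟨hq1, -⟩ := Nat.mem_divisorsAntidiagonal.mp hq
  have h1 : 0 < p.1 := Nat.pos_of_ne_zero (by
    rintro h0
    exact hn (by rw [← hp1, h0, zero_mul]))
  refine Prod.ext h (Nat.eq_of_mul_eq_mul_left h1 ?_)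
  rw [hp1, show p.1 = q.1 from h, hq1]

lemma Fc_norm_le (s : ℕ) (t : ℂ) {n : ℕ} (hn : n ≠ 0) :
    ‖Fc s t n‖ ≤ (n.divisors.card : ℝ) * (n : ℝ) ^ (-t.re) := by
  rw [Fc]
  split_ifs with h
  · rw [norm_mul, norm_mul, norm_pow, norm_pow, norm_neg, norm_one, one_pow, one_mul,
      Complex.norm_natCast_cpow_of_pos (Nat.pos_of_ne_zero hn), neg_re]
    have h2 : ‖(2:ℂ)‖ = 2 := by norm_num
    rw [h2]
    refine mul_le_mul_of_nonneg_right ?_ (Real.rpow_nonneg (Nat.cast_nonneg n) _)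
    exact_mod_cast two_pow_card_le hn
  · simpa using mul_nonneg (Nat.cast_nonneg _)
      (Real.rpow_nonneg (Nat.cast_nonneg n) (-t.re))

lemma Fc_summable (s : ℕ) {t : ℂ} (ht : 1 < t.re) : Summable (fun n => ‖Fc s t n‖) := by
  have h1 : (1:ℝ) < ((t.re : ℂ)).re := by simpa using ht
  have hζ : LSeriesSummable (↗ζ) ((t.re : ℂ)) := LSeriesSummable_zeta_iff.mpr h1
  have hd : LSeriesSummable ((↗ζ) ⍟ (↗ζ)) ((t.re : ℂ)) := hζ.convolution hζ
  have hre : Summable (fun n => (LSeries.term ((↗ζ) ⍟ (↗ζ)) ((t.re : ℂ)) n).re) :=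
    Summable.map hd Complex.reCLM Complex.reCLM.continuous
  refine Summable.of_nonneg_of_le (fun n => norm_nonneg _) (fun n => ?_) hre
  rcases eq_or_ne n 0 with rfl | hn
  · simp [Fc_zero]
  · refine (Fc_norm_le s t hn).trans ?_
    have hterm : LSeries.term ((↗ζ) ⍟ (↗ζ)) ((t.re : ℂ)) n
        = (((n.divisors.card : ℝ) * (n:ℝ) ^ (-t.re) : ℝ) : ℂ) := by
      rw [LSeries.term_of_ne_zero hn, LSeries.convolution_def]
      show (∑ p ∈ n.divisorsAntidiagonal, ((ζ p.1 : ℕ) : ℂ) * ((ζ p.2 : ℕ) : ℂ))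
          / (n:ℂ) ^ ((t.re : ℂ)) = _
      have hsum : (∑ p ∈ n.divisorsAntidiagonal, ((ζ p.1 : ℕ) : ℂ) * ((ζ p.2 : ℕ) : ℂ))
          = (n.divisorsAntidiagonal.card : ℂ) := by
        rw [Finset.card_eq_sum_ones]
        push_cast
        refine Finset.sum_congr rfl fun p hp => ?_
        obtain ⟨h₁, h₂⟩ := Nat.ne_zero_of_mem_divisorsAntidiagonal hp
        simp [zeta_apply_ne h₁, zeta_apply_ne h₂]
      rw [hsum, card_divisorsAntidiagonal' n,
        show ((n:ℂ)) ^ ((t.re : ℂ)) = (((n:ℝ) ^ t.re : ℝ) : ℂ) by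
          rw [← Complex.ofReal_natCast, Complex.ofReal_cpow (Nat.cast_nonneg n)],
        Real.rpow_neg (Nat.cast_nonneg n)]
      push_cast
      rw [div_eq_mul_inv]
    rw [hterm]
    simp

lemma Fc_pow (m : ℕ) (t : ℂ) {p : ℕ} (hp : p.Prime) (e : ℕ) :
    Fc (m+1) t (p ^ e)
      = (if e = 0 then 1 else if (m+1) ∣ e then 0 else 2 * (-1:ℂ)^(e/(m+1)))
          * ((p:ℂ) ^ (-t)) ^ e := by
  rcases eq_or_ne e 0 with rfl | he
  · simp [Fc_one]
  have hfac : (p ^ e).factorization = Finsupp.single p e := Nat.Prime.factorization_pow hp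
  have hpf : (p ^ e).primeFactors = {p} := Nat.primeFactors_prime_pow he hp
  have hcond : Pc (m+1) (p ^ e) ↔ ¬ (m+1) ∣ e := by
    constructor
    · rintro ⟨-, h⟩
      have := h p hp (dvd_pow_self p he)
      rwa [hfac, Finsupp.single_eq_same] at this
    · intro h
      refine ⟨pow_pos hp.pos e, fun q hq hd => ?_⟩
      have hqp : q = p := (Nat.prime_dvd_prime_iff_eq hq hp).mp (hq.dvd_of_dvd_pow hd)
      subst hqp
      rwa [hfac, Finsupp.single_eq_same]
  have hxe : ((p ^ e : ℕ) : ℂ) ^ (-t) = ((p:ℂ) ^ (-t)) ^ e := by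
    push_cast
    rw [← Complex.natCast_cpow_natCast_mul p e (-t), Complex.cpow_nat_mul]
  by_cases hdvd : (m+1) ∣ e
  · rw [Fc, if_neg (fun hc => (hcond.mp hc) hdvd), if_neg he, if_pos hdvd, zero_mul]
  · rw [Fc, if_pos (hcond.mpr hdvd), if_neg he, if_neg hdvd, hpf, hfac]
    rw [Finset.sum_singleton, Finsupp.single_eq_same, Finset.card_singleton, hxe]
    ring

lemma norm_x_lt_one {p : ℕ} (hp : p.Prime) {t : ℂ} (ht : 1 < t.re) :
    ‖(p:ℂ) ^ (-t)‖ < 1 := by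
  rw [Complex.norm_natCast_cpow_of_pos hp.pos, neg_re]
  exact Real.rpow_lt_one_of_one_lt_of_neg (by exact_mod_cast hp.one_lt) (by linarith)

lemma Fc_tsum_pow (m : ℕ) {t : ℂ} (ht : 1 < t.re) {p : ℕ} (hp : p.Prime) :
    ∑' e : ℕ, Fc (m+1) t (p ^ e)
      = (1 + (p:ℂ)^(-t)) * (1 - ((p:ℂ)^(-t))^(m+1))
          / ((1 - (p:ℂ)^(-t)) * (1 + ((p:ℂ)^(-t))^(m+1))) := by
  rw [tsum_congr (fun e => Fc_pow m t hp e), local_sum m (norm_x_lt_one hp ht)]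

lemma ne_one_aux {y : ℂ} (hy : ‖y‖ < 1) : 1 - y ≠ 0 ∧ 1 + y ≠ 0 := by
  constructor <;> intro h
  · have hy1 : y = 1 := by linear_combination -h
    rw [hy1] at hy; simp at hy
  · have hy1 : y = -1 := by linear_combination h
    rw [hy1] at hy; simp at hy

/-- For odd `s ≥ 3` and `Re t > 1`, the Dirichlet series over positive integers `n` such that
`s` divides none of the prime-factorization exponents of `n`, with coefficient
`(-1)^(∑_p ⌊v_p(n)/s⌋) · 2^(ω(n))`, equals `ζ(t)² ζ(2st) / (ζ(2t) ζ(st)²)`. -/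
theorem stmt_18 (s : ℕ) (hs : 3 ≤ s) (hodd : Odd s) (t : ℂ) (ht : 1 < t.re) :
    (∑' n : {n : ℕ // 0 < n ∧ ∀ p : ℕ, p.Prime → p ∣ n → ¬ s ∣ n.factorization p},
      (-1 : ℂ) ^ (∑ p ∈ (n : ℕ).primeFactors, (n : ℕ).factorization p / s) *
        (2 : ℂ) ^ (n : ℕ).primeFactors.card * ((n : ℕ) : ℂ) ^ (-t)) =
      riemannZeta t ^ 2 * riemannZeta ((2 * s : ℕ) * t) /
        (riemannZeta (2 * t) * riemannZeta (s * t) ^ 2) := by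
  obtain ⟨m, rfl⟩ : ∃ m, s = m + 1 := ⟨s - 1, by omega⟩
  -- re computations
  have h2re : 1 < (2 * t).re := by
    rw [show (2 * t).re = 2 * t.re by simp [Complex.mul_re]]
    linarith
  have hmre : (((m+1 : ℕ) : ℂ) * t).re = (m+1 : ℝ) * t.re := by
    simp [Complex.mul_re]
  have hsre : 1 < (((m+1 : ℕ) : ℂ) * t).re := by
    rw [hmre]
    have h1 : (1:ℝ) ≤ (m+1 : ℝ) := by norm_num
    nlinarith
  have h2sre : 1 < (((2*(m+1) : ℕ) : ℂ) * t).re := by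
    rw [show ((((2*(m+1) : ℕ)) : ℂ) * t).re = (2*(m+1) : ℝ) * t.re by
      push_cast; simp [Complex.mul_re]]
    have h0 : (0:ℝ) ≤ (m:ℝ) := Nat.cast_nonneg m
    have h1 : (1:ℝ) ≤ (2*(m+1) : ℝ) := by linarith
    nlinarith
  -- Euler product for Fc
  have hsum := Fc_summable (m+1) ht
  have HE := EulerProduct.eulerProduct_hasProd (f := Fc (m+1) t) (Fc_one (m+1) t)
    (fun {a b} h => Fc_mul (m+1) t h) hsum (Fc_zero (m+1) t)
  have hfe : (fun p : Nat.Primes => ∑' e : ℕ, Fc (m+1) t ((p : ℕ) ^ e))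
      = fun p : Nat.Primes =>
        (1 + ((p:ℕ):ℂ)^(-t)) * (1 - (((p:ℕ):ℂ)^(-t))^(m+1))
          / ((1 - ((p:ℕ):ℂ)^(-t)) * (1 + (((p:ℕ):ℂ)^(-t))^(m+1))) :=
    funext fun p => Fc_tsum_pow m ht p.prop
  rw [hfe] at HE
  -- Euler products for the zeta factors
  have Z1 := riemannZeta_eulerProduct_hasProd ht
  have Z2 := riemannZeta_eulerProduct_hasProd h2re
  have Zs := riemannZeta_eulerProduct_hasProd hsre
  have Z2s := riemannZeta_eulerProduct_hasProd h2sre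
  have hZ2 : (fun p : Nat.Primes => (1 - ((p:ℕ):ℂ) ^ (-(2 * t)))⁻¹)
      = fun p : Nat.Primes => (1 - (((p:ℕ):ℂ) ^ (-t))^2)⁻¹ := by
    funext p
    rw [show -(2 * t) = ((2:ℕ):ℂ) * (-t) by push_cast; ring, Complex.cpow_nat_mul]
  rw [hZ2] at Z2
  have hZs : (fun p : Nat.Primes => (1 - ((p:ℕ):ℂ) ^ (-(((m+1:ℕ):ℂ) * t)))⁻¹)
      = fun p : Nat.Primes => (1 - (((p:ℕ):ℂ) ^ (-t))^(m+1))⁻¹ := by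
    funext p
    rw [show -(((m+1:ℕ):ℂ) * t) = ((m+1:ℕ):ℂ) * (-t) by ring, Complex.cpow_nat_mul]
  rw [hZs] at Zs
  have hZ2s : (fun p : Nat.Primes => (1 - ((p:ℕ):ℂ) ^ (-(((2*(m+1):ℕ):ℂ) * t)))⁻¹)
      = fun p : Nat.Primes => (1 - ((((p:ℕ):ℂ) ^ (-t))^(m+1))^2)⁻¹ := by
    funext p
    rw [show -(((2*(m+1):ℕ):ℂ) * t) = ((2*(m+1):ℕ):ℂ) * (-t) by ring,
      Complex.cpow_nat_mul, show 2*(m+1) = (m+1)*2 by ring, pow_mul]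
  rw [hZ2s] at Z2s
  -- combine
  have HL := HE.mul (Z2.mul (Zs.mul Zs))
  have HR := (Z1.mul Z1).mul Z2s
  have hfun : (fun p : Nat.Primes =>
      (1 + ((p:ℕ):ℂ)^(-t)) * (1 - (((p:ℕ):ℂ)^(-t))^(m+1))
          / ((1 - ((p:ℕ):ℂ)^(-t)) * (1 + (((p:ℕ):ℂ)^(-t))^(m+1)))
        * ((1 - (((p:ℕ):ℂ) ^ (-t))^2)⁻¹ *
            ((1 - (((p:ℕ):ℂ) ^ (-t))^(m+1))⁻¹ * (1 - (((p:ℕ):ℂ) ^ (-t))^(m+1))⁻¹)))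
      = fun p : Nat.Primes =>
        (1 - ((p:ℕ):ℂ) ^ (-t))⁻¹ * (1 - ((p:ℕ):ℂ) ^ (-t))⁻¹ *
          (1 - ((((p:ℕ):ℂ) ^ (-t))^(m+1))^2)⁻¹ := by
    funext p
    have hx := norm_x_lt_one p.prop ht
    set x : ℂ := ((p:ℕ):ℂ) ^ (-t) with hxdef
    obtain ⟨hx1, hx2⟩ := ne_one_aux hx
    have hxs : ‖x ^ (m+1)‖ < 1 := by
      rw [norm_pow]; exact pow_lt_one₀ (norm_nonneg x) hx (by omega)
    obtain ⟨hx3, hx4⟩ := ne_one_aux hxs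
    have hx5 : 1 - x^2 ≠ 0 := by
      intro h
      have h' : (1 - x) * (1 + x) = 0 := by linear_combination h
      rcases mul_eq_zero.mp h' with h'' | h'' <;> [exact hx1 h''; exact hx2 h'']
    have hx6 : 1 - (x^(m+1))^2 ≠ 0 := by
      intro h
      have h' : (1 - x^(m+1)) * (1 + x^(m+1)) = 0 := by linear_combination h
      rcases mul_eq_zero.mp h' with h'' | h'' <;> [exact hx3 h''; exact hx4 h'']
    field_simp
    ring
  rw [hfun] at HL
  have key := HL.unique HR
  -- turn the subtype sum into the full sum
  have hsub : (∑' n : {n : ℕ // 0 < n ∧ ∀ p : ℕ, p.Prime → p ∣ n → ¬ (m+1) ∣ n.factorization p},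
      (-1 : ℂ) ^ (∑ p ∈ (n : ℕ).primeFactors, (n : ℕ).factorization p / (m+1)) *
        (2 : ℂ) ^ (n : ℕ).primeFactors.card * ((n : ℕ) : ℂ) ^ (-t))
      = ∑' n : ℕ, Fc (m+1) t n := by
    refine Eq.trans (tsum_subtype
      {n : ℕ | 0 < n ∧ ∀ p : ℕ, p.Prime → p ∣ n → ¬ (m+1) ∣ n.factorization p}
      (fun n => (-1 : ℂ) ^ (∑ p ∈ n.primeFactors, n.factorization p / (m+1)) *
        (2 : ℂ) ^ n.primeFactors.card * ((n : ℕ) : ℂ) ^ (-t)))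
      (tsum_congr fun n => ?_)
    by_cases h : Pc (m+1) n
    · rw [Set.indicator_of_mem (show n ∈ {n : ℕ | 0 < n ∧ ∀ p : ℕ, p.Prime → p ∣ n →
          ¬ (m+1) ∣ n.factorization p} from h), Fc, if_pos h]
    · rw [Set.indicator_of_notMem (show n ∉ {n : ℕ | 0 < n ∧ ∀ p : ℕ, p.Prime → p ∣ n →
          ¬ (m+1) ∣ n.factorization p} from h), Fc, if_neg h]
  rw [hsub]
  have hz2 : riemannZeta (2 * t) ≠ 0 := riemannZeta_ne_zero_of_one_lt_re h2re
  have hzs : riemannZeta (((m+1:ℕ):ℂ) * t) ≠ 0 := riemannZeta_ne_zero_of_one_lt_re hsre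
  rw [eq_div_iff (mul_ne_zero hz2 (pow_ne_zero 2 hzs))]
  linear_combination key
end

section
/- For every complex number s with Re s > 1, ∫_0^∞ t^(s/2 − 1) · (1 − θ₄(t)) dt = 2 · π^(−s/2) · Γ(s/2) · (1 − 2^(1−s)) · ζ(s), where θ₄(t) = ∑_{n ∈ ℤ} (−1)^n e^(−π n² t) for real t > 0, Γ is the Gamma function, and ζ is the Riemann zeta function; the factor (1 − 2^(1−s))·ζ(s) equals the Dirichlet eta function η(s) = ∑_{n=1}^∞ (−1)^(n+1) n^(−s). In other words, up to these explicit factors, the Mellin transform of 1 − θ₄ is the alternating Riemann zeta function. -/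
open Complex Real Set HurwitzZeta MeasureTheory

lemma aux_cpow_ne_zero {x : ℂ} (hx : x ≠ 0) (s : ℂ) : x ^ s ≠ 0 := by
  rw [Complex.cpow_def_of_ne_zero hx]
  exact Complex.exp_ne_zero _

/-- The alternating zeta (eta) series sums to `(2^(1-s) - 1) ζ(s)` for `Re s > 1`. -/
lemma aux_hasSum_eta {s : ℂ} (hs : 1 < s.re) :
    HasSum (fun n : ℕ ↦ ((-1 : ℂ)) ^ n / (n : ℂ) ^ s)
      (((2 : ℂ) ^ (1 - s) - 1) * riemannZeta s) := by
  have hs0 : s ≠ 0 := ne_zero_of_one_lt_re hs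
  have Z : HasSum (fun n : ℕ ↦ 1 / (n : ℂ) ^ s) (riemannZeta s) := by
    have := hasSum_nat_cosZeta 0 hs
    simpa [Real.cos_zero, cosZeta_zero] using this
  have hinj : Function.Injective (fun m : ℕ ↦ 2 * m) := fun a b h ↦ by
    simp only [] at h; omega
  have hcpow : ∀ m : ℕ, ((2 * m : ℕ) : ℂ) ^ s = (2 : ℂ) ^ s * (m : ℂ) ^ s := by
    intro m
    have h2 : ((2 * m : ℕ) : ℂ) = ((2 : ℝ) : ℂ) * ((m : ℝ) : ℂ) := by push_cast; ring
    rw [h2, mul_cpow_ofReal_nonneg (by norm_num) m.cast_nonneg]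
    norm_num
  have h2s : (2 : ℂ) ^ (1 - s) = 2 * ((2 : ℂ) ^ s)⁻¹ := by
    rw [cpow_sub _ _ two_ne_zero, cpow_one, div_eq_mul_inv]
  have h2ne : (2 : ℂ) ^ s ≠ 0 := aux_cpow_ne_zero two_ne_zero s
  have E : HasSum (fun n : ℕ ↦ if 2 ∣ n then 2 / (n : ℂ) ^ s else 0)
      ((2 : ℂ) ^ (1 - s) * riemannZeta s) := by
    rw [← Function.Injective.hasSum_iff hinj ?_]
    · have hZ := Z.mul_left (2 * ((2 : ℂ) ^ s)⁻¹)
      rw [← h2s] at hZ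
      refine hZ.congr_fun fun m ↦ ?_
      simp only [Function.comp_apply]
      rw [if_pos ⟨m, rfl⟩, hcpow m, h2s]
      rcases eq_or_ne (m : ℂ) 0 with h | h
      · rw [h, zero_cpow hs0]; simp
      · have hm : (m : ℂ) ^ s ≠ 0 := aux_cpow_ne_zero h s
        field_simp
    · rintro n hn
      rw [if_neg]
      rintro ⟨m, rfl⟩
      exact hn ⟨m, rfl⟩
  have A := E.sub Z
  rw [sub_mul, one_mul]
  refine A.congr_fun fun n ↦ ?_
  rcases Nat.even_or_odd n with h | h
  · rw [if_pos h.two_dvd, h.neg_one_pow]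
    ring
  · rw [if_neg (fun hd ↦ (Nat.not_even_iff_odd.mpr h) (even_iff_two_dvd.mpr hd)),
      h.neg_one_pow]
    ring

/-- For `Re s > 1`, the Mellin-type transform `∫_0^∞ t^(s/2 - 1) (1 - θ₄(t)) dt`, where
`θ₄(t) = ∑_{n ∈ ℤ} (-1)^n e^(-π n² t)`, equals
`2 π^(-s/2) Γ(s/2) (1 - 2^(1-s)) ζ(s)`, i.e. `2 π^(-s/2) Γ(s/2) η(s)` with `η` the Dirichlet
eta function. -/
theorem stmt_19 (s : ℂ) (hs : 1 < s.re) :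
    (∫ t in Set.Ioi (0 : ℝ), (t : ℂ) ^ (s / 2 - 1) *
        (1 - ((∑' n : ℤ, (-1 : ℝ) ^ n * Real.exp (-Real.pi * (n : ℝ) ^ 2 * t) : ℝ) : ℂ))) =
      2 * (Real.pi : ℂ) ^ (-s / 2) * Complex.Gamma (s / 2) *
        (1 - (2 : ℂ) ^ (1 - s)) * riemannZeta s := by
  have hs0 : s ≠ 0 := ne_zero_of_one_lt_re hs
  have hGne : Gammaℝ s ≠ 0 := Gammaℝ_ne_zero_of_re_pos (by linarith)
  have hs2 : (1 / 2 : ℝ) < (s / 2).re := by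
    rw [Complex.div_ofNat_re]; linarith
  -- the theta series equals the cosine kernel at a = 1/2
  have hker : ∀ t : ℝ, 0 < t →
      (∑' n : ℤ, (-1 : ℝ) ^ n * Real.exp (-Real.pi * (n : ℝ) ^ 2 * t))
        = cosKernel ((1 / 2 : ℝ) : UnitAddCircle) t := by
    intro t ht
    refine HasSum.tsum_eq ?_
    rw [← Complex.hasSum_ofReal]
    have h := hasSum_int_cosKernel (1 / 2 : ℝ) ht
    refine h.congr_fun fun n ↦ ?_
    have he : (2 * (π : ℂ) * I * ((1 / 2 : ℝ) : ℂ) * (n : ℂ)) = (n : ℂ) * ((π : ℂ) * I) := by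
      push_cast; ring
    rw [he, Complex.exp_int_mul, Complex.exp_pi_mul_I]
    push_cast
    ring
  -- cosZeta at 1/2 is (2^(1-s) - 1) ζ(s)
  have hcz : cosZeta ((1 / 2 : ℝ) : UnitAddCircle) s
      = ((2 : ℂ) ^ (1 - s) - 1) * riemannZeta s := by
    have h := hasSum_nat_cosZeta (1 / 2 : ℝ) hs
    have h' : HasSum (fun n : ℕ ↦ ((-1 : ℂ)) ^ n / (n : ℂ) ^ s)
        (cosZeta ((1 / 2 : ℝ) : UnitAddCircle) s) := by
      refine h.congr_fun fun n ↦ ?_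
      congr 1
      rw [show (2 * π * (1 / 2 : ℝ) * n) = 0 + n * π by ring, Real.cos_add_nat_mul_pi, Real.cos_zero, mul_one]
      push_cast
      ring
    exact h'.unique (aux_hasSum_eta hs)
  -- completed cos zeta
  have hcc : completedCosZeta ((1 / 2 : ℝ) : UnitAddCircle) s
      = Gammaℝ s * (((2 : ℂ) ^ (1 - s) - 1) * riemannZeta s) := by
    rw [← hcz, cosZeta, Function.update_of_ne hs0]
    field_simp
  -- Mellin transform identity
  have key : mellin (fun t ↦ ((cosKernel ((1 / 2 : ℝ) : UnitAddCircle) t : ℂ) - 1)) (s / 2)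
      = 2 * completedCosZeta ((1 / 2 : ℝ) : UnitAddCircle) s := by
    have hM := ((hurwitzEvenFEPair ((1 / 2 : ℝ) : UnitAddCircle)).symm.hasMellin hs2).2
    have h2 : 2 * completedCosZeta ((1 / 2 : ℝ) : UnitAddCircle) s
        = (hurwitzEvenFEPair ((1 / 2 : ℝ) : UnitAddCircle)).symm.Λ (s / 2) := by
      rw [completedCosZeta]; ring
    rw [h2, ← hM]
    rfl
  -- rewrite the integral as a (negated) Mellin transform
  have hint : (∫ t in Set.Ioi (0 : ℝ), (t : ℂ) ^ (s / 2 - 1) *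
        (1 - ((∑' n : ℤ, (-1 : ℝ) ^ n * Real.exp (-Real.pi * (n : ℝ) ^ 2 * t) : ℝ) : ℂ)))
      = -mellin (fun t ↦ ((cosKernel ((1 / 2 : ℝ) : UnitAddCircle) t : ℂ) - 1)) (s / 2) := by
    rw [mellin, ← integral_neg]
    refine setIntegral_congr_fun measurableSet_Ioi fun t ht ↦ ?_
    rw [hker t ht, smul_eq_mul]
    ring
  rw [hint, key, hcc, Gammaℝ_def]
  ring
end
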